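/- arXiv:0810.0851 — 7 statements merged into one kernel-verified Lean document; each statement's English description precedes it below -/
import Mathlib

section
/- Let a, b be integers with a ≥ 1, b ≥ 1 and a*b ≥ 4, let c, d be the associated recursive sequences and g n = gcd(c n, d n). Then for every prime p there exists a smallest positive integer k such that p divides g k; moreover, for this k and for every integer n ≥ 1, p divides g n if and only if k divides n. -/
/-- The pair of recursive sequences `(c n, d n)` associated to a generalized
Cartan matrix of rank two with off-diagonal entries `-a`, `-b`:
`c 0 = d 0 = 0`, `c 1 = d 1 = 1`, `c (j+1) = a * d j - c (j-1)`,
`d (j+1) = b * c j - d (j-1)`. -/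
def KMcd (a b : ℤ) : ℕ → ℤ × ℤ
  | 0 => (0, 0)
  | 1 => (1, 1)
  | n + 2 => (a * (KMcd a b (n + 1)).2 - (KMcd a b n).1,
              b * (KMcd a b (n + 1)).1 - (KMcd a b n).2)

/-- The sequence `c`. -/
def KMc (a b : ℤ) (n : ℕ) : ℤ := (KMcd a b n).1

/-- The sequence `d`. -/
def KMd (a b : ℤ) (n : ℕ) : ℤ := (KMcd a b n).2

/-- `g n = gcd (c n) (d n)`. -/
def KMg (a b : ℤ) (n : ℕ) : ℕ := Int.gcd (KMc a b n) (KMd a b n)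

lemma KMc_add_two (a b : ℤ) (n : ℕ) :
    KMc a b (n + 2) = a * KMd a b (n + 1) - KMc a b n := rfl

lemma KMd_add_two (a b : ℤ) (n : ℕ) :
    KMd a b (n + 2) = b * KMc a b (n + 1) - KMd a b n := rfl

lemma KMc_zero (a b : ℤ) : KMc a b 0 = 0 := rfl
lemma KMd_zero (a b : ℤ) : KMd a b 0 = 0 := rfl
lemma KMc_one (a b : ℤ) : KMc a b 1 = 1 := rfl
lemma KMd_one (a b : ℤ) : KMd a b 1 = 1 := rfl

/-- Parity identities: `c` and `d` agree at odd indices, and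
`a * d = b * c` at even indices. -/
lemma KM_parity (a b : ℤ) : ∀ m : ℕ,
    KMc a b (2 * m + 1) = KMd a b (2 * m + 1) ∧
    a * KMd a b (2 * m) = b * KMc a b (2 * m) := by
  intro m
  induction m with
  | zero =>
      refine ⟨rfl, ?_⟩
      norm_num [KMc_zero, KMd_zero]
  | succ m ih =>
      obtain ⟨h1, h2⟩ := ih
      have hc2 : KMc a b (2 * m + 2) = a * KMd a b (2 * m + 1) - KMc a b (2 * m) :=
        KMc_add_two a b (2 * m)
      have hd2 : KMd a b (2 * m + 2) = b * KMc a b (2 * m + 1) - KMd a b (2 * m) :=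
        KMd_add_two a b (2 * m)
      have hc3 : KMc a b (2 * m + 3) = a * KMd a b (2 * m + 2) - KMc a b (2 * m + 1) :=
        KMc_add_two a b (2 * m + 1)
      have hd3 : KMd a b (2 * m + 3) = b * KMc a b (2 * m + 2) - KMd a b (2 * m + 1) :=
        KMd_add_two a b (2 * m + 1)
      have key2 : a * KMd a b (2 * m + 2) = b * KMc a b (2 * m + 2) := by
        rw [hc2, hd2]; linear_combination a * b * h1 - h2
      have key3 : KMc a b (2 * m + 3) = KMd a b (2 * m + 3) := by
        rw [hc3, hd3]; linear_combination key2 - h1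
      constructor
      · rw [show 2 * (m + 1) + 1 = 2 * m + 3 from by ring]; exact key3
      · rw [show 2 * (m + 1) = 2 * m + 2 from by ring]; exact key2

/-- Recursion for `c` modulo `p`. -/
lemma ZC_add_two (a b : ℤ) (p : ℕ) (n : ℕ) :
    ((KMc a b (n + 2) : ZMod p)) =
      (a : ZMod p) * (KMd a b (n + 1) : ZMod p) - (KMc a b n : ZMod p) := by
  rw [KMc_add_two]; push_cast; ring

/-- Recursion for `d` modulo `p`. -/
lemma ZD_add_two (a b : ℤ) (p : ℕ) (n : ℕ) :
    ((KMd a b (n + 2) : ZMod p)) =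
      (b : ZMod p) * (KMc a b (n + 1) : ZMod p) - (KMd a b n : ZMod p) := by
  rw [KMd_add_two]; push_cast; ring

/-- No two consecutive full zeros mod `p`. -/
lemma KM_L0 (a b : ℤ) (p : ℕ) [Fact p.Prime] : ∀ k : ℕ,
    ¬ ((KMc a b k : ZMod p) = 0 ∧ (KMd a b k : ZMod p) = 0 ∧
       (KMc a b (k + 1) : ZMod p) = 0 ∧ (KMd a b (k + 1) : ZMod p) = 0) := by
  intro k
  induction k with
  | zero =>
      rintro ⟨-, -, h, -⟩
      rw [KMc_one] at h
      simp at h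
  | succ k ih =>
      rintro ⟨h1, h2, h3, h4⟩
      have h3' : (KMc a b (k + 2) : ZMod p) = 0 := h3
      have h4' : (KMd a b (k + 2) : ZMod p) = 0 := h4
      apply ih
      refine ⟨?_, ?_, h1, h2⟩
      · have h := ZC_add_two a b p k
        rw [h3', h2] at h
        linear_combination h
      · have h := ZD_add_two a b p k
        rw [h4', h1] at h
        linear_combination h

/-- If `p ∣ a` then `c` has no two consecutive zeros mod `p`. -/
lemma KM_L1 (a b : ℤ) (p : ℕ) [Fact p.Prime] (ha : (a : ZMod p) = 0) : ∀ k : ℕ,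
    ¬ ((KMc a b k : ZMod p) = 0 ∧ (KMc a b (k + 1) : ZMod p) = 0) ∧
    ¬ ((KMc a b (k + 1) : ZMod p) = 0 ∧ (KMc a b (k + 2) : ZMod p) = 0) := by
  intro k
  induction k with
  | zero =>
      constructor
      · rintro ⟨-, h⟩; rw [KMc_one] at h; simp at h
      · rintro ⟨h, -⟩; rw [KMc_one] at h; simp at h
  | succ k ih =>
      refine ⟨ih.2, ?_⟩
      rintro ⟨h1, h2⟩
      have h1' : (KMc a b (k + 2) : ZMod p) = 0 := h1
      have h2' : (KMc a b (k + 3) : ZMod p) = 0 := h2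
      apply ih.1
      constructor
      · have h := ZC_add_two a b p k
        rw [h1', ha] at h
        linear_combination h
      · have h := ZC_add_two a b p (k + 1)
        rw [h2', ha] at h
        linear_combination h

/-- If `p ∣ b` then `d` has no two consecutive zeros mod `p`. -/
lemma KM_L1' (a b : ℤ) (p : ℕ) [Fact p.Prime] (hb : (b : ZMod p) = 0) : ∀ k : ℕ,
    ¬ ((KMd a b k : ZMod p) = 0 ∧ (KMd a b (k + 1) : ZMod p) = 0) ∧
    ¬ ((KMd a b (k + 1) : ZMod p) = 0 ∧ (KMd a b (k + 2) : ZMod p) = 0) := by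
  intro k
  induction k with
  | zero =>
      constructor
      · rintro ⟨-, h⟩; rw [KMd_one] at h; simp at h
      · rintro ⟨h, -⟩; rw [KMd_one] at h; simp at h
  | succ k ih =>
      refine ⟨ih.2, ?_⟩
      rintro ⟨h1, h2⟩
      have h1' : (KMd a b (k + 2) : ZMod p) = 0 := h1
      have h2' : (KMd a b (k + 3) : ZMod p) = 0 := h2
      apply ih.1
      constructor
      · have h := ZD_add_two a b p k
        rw [h1', hb] at h
        linear_combination h
      · have h := ZD_add_two a b p (k + 1)
        rw [h2', hb] at h
        linear_combination h

/-- Shift formula: if `(c k, d k) ≡ (0,0)` then the sequence shifted by `k`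
is a twisted multiple of the original sequence mod `p`. -/
lemma KM_shift (a b : ℤ) (p k : ℕ)
    (hc : (KMc a b k : ZMod p) = 0) (hd : (KMd a b k : ZMod p) = 0) : ∀ m : ℕ,
    ((KMc a b (k + 2 * m) : ZMod p) = (KMd a b (k + 1) : ZMod p) * (KMc a b (2 * m) : ZMod p) ∧
     (KMd a b (k + 2 * m) : ZMod p) = (KMc a b (k + 1) : ZMod p) * (KMd a b (2 * m) : ZMod p)) ∧
    ((KMc a b (k + 2 * m + 1) : ZMod p) = (KMc a b (k + 1) : ZMod p) * (KMc a b (2 * m + 1) : ZMod p) ∧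
     (KMd a b (k + 2 * m + 1) : ZMod p) = (KMd a b (k + 1) : ZMod p) * (KMd a b (2 * m + 1) : ZMod p)) := by
  intro m
  induction m with
  | zero =>
      refine ⟨⟨?_, ?_⟩, ?_, ?_⟩
      · show (KMc a b k : ZMod p) = _ * (KMc a b 0 : ZMod p)
        rw [KMc_zero, hc]; push_cast; ring
      · show (KMd a b k : ZMod p) = _ * (KMd a b 0 : ZMod p)
        rw [KMd_zero, hd]; push_cast; ring
      · show (KMc a b (k + 1) : ZMod p) = _ * (KMc a b 1 : ZMod p)
        rw [KMc_one]; push_cast; ring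
      · show (KMd a b (k + 1) : ZMod p) = _ * (KMd a b 1 : ZMod p)
        rw [KMd_one]; push_cast; ring
  | succ m ih =>
      obtain ⟨⟨hce, hde⟩, hco, hdo⟩ := ih
      have hCE : (KMc a b (k + 2 * m + 2) : ZMod p) =
          (KMd a b (k + 1) : ZMod p) * (KMc a b (2 * m + 2) : ZMod p) := by
        rw [ZC_add_two a b p (k + 2 * m), ZC_add_two a b p (2 * m), hdo, hce]; ring
      have hDE : (KMd a b (k + 2 * m + 2) : ZMod p) =
          (KMc a b (k + 1) : ZMod p) * (KMd a b (2 * m + 2) : ZMod p) := by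
        rw [ZD_add_two a b p (k + 2 * m), ZD_add_two a b p (2 * m), hco, hde]; ring
      have hCO : (KMc a b (k + 2 * m + 3) : ZMod p) =
          (KMc a b (k + 1) : ZMod p) * (KMc a b (2 * m + 3) : ZMod p) := by
        rw [ZC_add_two a b p (k + 2 * m + 1), ZC_add_two a b p (2 * m + 1), hDE, hco]; ring
      have hDO : (KMd a b (k + 2 * m + 3) : ZMod p) =
          (KMd a b (k + 1) : ZMod p) * (KMd a b (2 * m + 3) : ZMod p) := by
        rw [ZD_add_two a b p (k + 2 * m + 1), ZD_add_two a b p (2 * m + 1), hCE, hdo]; ring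
      refine ⟨⟨?_, ?_⟩, ?_, ?_⟩
      · rw [show k + 2 * (m + 1) = k + 2 * m + 2 from by ring,
           show 2 * (m + 1) = 2 * m + 2 from by ring]; exact hCE
      · rw [show k + 2 * (m + 1) = k + 2 * m + 2 from by ring,
           show 2 * (m + 1) = 2 * m + 2 from by ring]; exact hDE
      · rw [show k + 2 * (m + 1) + 1 = k + 2 * m + 3 from by ring,
           show 2 * (m + 1) + 1 = 2 * m + 3 from by ring]; exact hCO
      · rw [show k + 2 * (m + 1) + 1 = k + 2 * m + 3 from by ring,
           show 2 * (m + 1) + 1 = 2 * m + 3 from by ring]; exact hDO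

/-- Key lemma: if `p ∣ g k` then `p ∣ g (k + n) ↔ p ∣ g n`, phrased mod `p`. -/
lemma KM_lemA (a b : ℤ) (p : ℕ) [Fact p.Prime] (k : ℕ)
    (hc : (KMc a b k : ZMod p) = 0) (hd : (KMd a b k : ZMod p) = 0) (n : ℕ) :
    ((KMc a b (k + n) : ZMod p) = 0 ∧ (KMd a b (k + n) : ZMod p) = 0) ↔
    ((KMc a b n : ZMod p) = 0 ∧ (KMd a b n : ZMod p) = 0) := by
  rcases Nat.even_or_odd n with he | ho
  · obtain ⟨m, rfl⟩ := he
    rw [show m + m = 2 * m from by ring]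
    obtain ⟨hce, hde⟩ := (KM_shift a b p k hc hd m).1
    have hid : (a : ZMod p) * (KMd a b (2 * m) : ZMod p)
        = (b : ZMod p) * (KMc a b (2 * m) : ZMod p) := by
      have h := congrArg (fun z : ℤ => (z : ZMod p)) (KM_parity a b m).2
      push_cast at h
      exact h
    constructor
    · rintro ⟨hcn, hdn⟩
      rw [hce] at hcn
      rw [hde] at hdn
      rcases mul_eq_zero.mp hcn with hmu | hC
      · rcases mul_eq_zero.mp hdn with hlam | hD
        · exact absurd ⟨hc, hd, hlam, hmu⟩ (KM_L0 a b p k)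
        · by_cases hC : (KMc a b (2 * m) : ZMod p) = 0
          · exact ⟨hC, hD⟩
          · have hb0 : (b : ZMod p) = 0 := by
              rw [hD, mul_zero] at hid
              exact ((mul_eq_zero.mp hid.symm).resolve_right hC)
            exact absurd ⟨hd, hmu⟩ ((KM_L1' a b p hb0 k).1)
      · rcases mul_eq_zero.mp hdn with hlam | hD
        · by_cases hD : (KMd a b (2 * m) : ZMod p) = 0
          · exact ⟨hC, hD⟩
          · have ha0 : (a : ZMod p) = 0 := by
              rw [hC, mul_zero] at hid
              exact ((mul_eq_zero.mp hid).resolve_right hD)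
            exact absurd ⟨hc, hlam⟩ ((KM_L1 a b p ha0 k).1)
        · exact ⟨hC, hD⟩
    · rintro ⟨hcn, hdn⟩
      rw [hce, hde, hcn, hdn, mul_zero, mul_zero]
      exact ⟨rfl, rfl⟩
  · obtain ⟨m, rfl⟩ := ho
    rw [show k + (2 * m + 1) = k + 2 * m + 1 from by ring]
    obtain ⟨hco, hdo⟩ := (KM_shift a b p k hc hd m).2
    have hcd : (KMc a b (2 * m + 1) : ZMod p) = (KMd a b (2 * m + 1) : ZMod p) := by
      rw [(KM_parity a b m).1]
    constructor
    · rintro ⟨hcn, hdn⟩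
      by_cases hC : (KMc a b (2 * m + 1) : ZMod p) = 0
      · exact ⟨hC, hcd ▸ hC⟩
      · rw [hco] at hcn
        rw [hdo] at hdn
        have hlam : (KMc a b (k + 1) : ZMod p) = 0 := (mul_eq_zero.mp hcn).resolve_right hC
        have hmu : (KMd a b (k + 1) : ZMod p) = 0 :=
          (mul_eq_zero.mp hdn).resolve_right (fun h => hC (hcd ▸ h))
        exact absurd ⟨hc, hd, hlam, hmu⟩ (KM_L0 a b p k)
    · rintro ⟨hcn, hdn⟩
      rw [hco, hdo, hcn, hdn, mul_zero, mul_zero]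
      exact ⟨rfl, rfl⟩

/-- Existence of a positive index where both sequences vanish mod `p`. -/
lemma KM_exists (a b : ℤ) (p : ℕ) [Fact p.Prime] :
    ∃ k : ℕ, 0 < k ∧ (KMc a b k : ZMod p) = 0 ∧ (KMd a b k : ZMod p) = 0 := by
  haveI : NeZero p := ⟨(Fact.out : p.Prime).ne_zero⟩
  set s : ℕ → ZMod p × ZMod p × ZMod p × ZMod p := fun n =>
    ((KMc a b n : ZMod p), (KMd a b n : ZMod p),
     (KMc a b (n + 1) : ZMod p), (KMd a b (n + 1) : ZMod p)) with hs_def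
  have hstep : ∀ i j : ℕ, s (i + 1) = s (j + 1) → s i = s j := by
    intro i j h
    simp only [hs_def, Prod.mk.injEq] at h ⊢
    obtain ⟨h1, h2, h3, h4⟩ := h
    have h3' : (KMc a b (i + 2) : ZMod p) = (KMc a b (j + 2) : ZMod p) := h3
    have h4' : (KMd a b (i + 2) : ZMod p) = (KMd a b (j + 2) : ZMod p) := h4
    refine ⟨?_, ?_, h1, h2⟩
    · have hi := ZC_add_two a b p i
      have hj := ZC_add_two a b p j
      linear_combination (a : ZMod p) * h2 - h3' + hi - hj
    · have hi := ZD_add_two a b p i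
      have hj := ZD_add_two a b p j
      linear_combination (b : ZMod p) * h1 - h4' + hi - hj
  have hback : ∀ t i : ℕ, s i = s (i + t) → s 0 = s t := by
    intro t i
    induction i with
    | zero => intro h; simpa using h
    | succ i ih =>
        intro h
        apply ih
        apply hstep
        rw [show i + t + 1 = i + 1 + t from by ring]
        exact h
  obtain ⟨x, y, hxy, hsxy⟩ := Finite.exists_ne_map_eq_of_infinite s
  rcases Nat.lt_or_ge x y with hlt | hge
  · have h0 : s 0 = s (y - x) := by
      apply hback (y - x) x
      rw [show x + (y - x) = y from by omega]
      exact hsxy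
    simp only [hs_def, Prod.mk.injEq, KMc_zero, KMd_zero] at h0
    refine ⟨y - x, by omega, ?_, ?_⟩
    · have := h0.1; push_cast at this ⊢; exact this.symm
    · have := h0.2.1; push_cast at this ⊢; exact this.symm
  · have hlt : y < x := by omega
    have h0 : s 0 = s (x - y) := by
      apply hback (x - y) y
      rw [show y + (x - y) = x from by omega]
      exact hsxy.symm
    simp only [hs_def, Prod.mk.injEq, KMc_zero, KMd_zero] at h0
    refine ⟨x - y, by omega, ?_, ?_⟩
    · have := h0.1; push_cast at this ⊢; exact this.symm
    · have := h0.2.1; push_cast at this ⊢; exact this.symm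

/-- Bridge between divisibility of the gcd and vanishing mod `p`. -/
lemma KM_bridge (a b : ℤ) (p : ℕ) (n : ℕ) :
    p ∣ KMg a b n ↔
      ((KMc a b n : ZMod p) = 0 ∧ (KMd a b n : ZMod p) = 0) := by
  rw [KMg]
  constructor
  · intro h
    have h' : (p : ℤ) ∣ (Int.gcd (KMc a b n) (KMd a b n) : ℤ) := Int.natCast_dvd_natCast.mpr h
    exact ⟨(ZMod.intCast_zmod_eq_zero_iff_dvd _ _).mpr (h'.trans (Int.gcd_dvd_left _ _)),
           (ZMod.intCast_zmod_eq_zero_iff_dvd _ _).mpr (h'.trans (Int.gcd_dvd_right _ _))⟩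
  · rintro ⟨h1, h2⟩
    have h1' := (ZMod.intCast_zmod_eq_zero_iff_dvd _ _).mp h1
    have h2' := (ZMod.intCast_zmod_eq_zero_iff_dvd _ _).mp h2
    exact Int.natCast_dvd_natCast.mp (Int.dvd_coe_gcd h1' h2')

theorem smallest_k_exists_and_divisibility
    (a b : ℤ) (ha : 1 ≤ a) (hb : 1 ≤ b) (hab : 4 ≤ a * b)
    (p : ℕ) (hp : p.Prime) :
    ∃ k : ℕ, 0 < k ∧ p ∣ KMg a b k ∧
      (∀ m : ℕ, 0 < m → m < k → ¬ p ∣ KMg a b m) ∧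
      (∀ n : ℕ, 1 ≤ n → (p ∣ KMg a b n ↔ k ∣ n)) := by
  haveI : Fact p.Prime := ⟨hp⟩
  have hex : ∃ k : ℕ, 0 < k ∧ p ∣ KMg a b k := by
    obtain ⟨k, hk0, hkc, hkd⟩ := KM_exists a b p
    exact ⟨k, hk0, (KM_bridge a b p k).mpr ⟨hkc, hkd⟩⟩
  set K := Nat.find hex with hK
  obtain ⟨hK0, hKdvd⟩ := Nat.find_spec hex
  obtain ⟨hKc, hKd⟩ := (KM_bridge a b p K).mp hKdvd
  have hlemA : ∀ n : ℕ, p ∣ KMg a b (K + n) ↔ p ∣ KMg a b n := by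
    intro n
    rw [KM_bridge, KM_bridge]
    exact KM_lemA a b p K hKc hKd n
  refine ⟨K, hK0, hKdvd, ?_, ?_⟩
  · intro m hm hmK hdvd
    exact Nat.find_min hex hmK ⟨hm, hdvd⟩
  · intro n hn
    constructor
    · -- p ∣ g n → K ∣ n, by strong induction
      induction n using Nat.strong_induction_on with
      | _ n ih =>
        intro hdvd
        by_cases hlt : n < K
        · exact absurd ⟨hn, hdvd⟩ (Nat.find_min hex hlt)
        · push_neg at hlt
          have hsub : p ∣ KMg a b (n - K) := by
            have := (hlemA (n - K)).mp
            rw [show K + (n - K) = n from by omega] at this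
            exact this hdvd
          rcases Nat.eq_zero_or_pos (n - K) with h0 | hpos
          · have : n = K := by omega
            exact this ▸ dvd_refl K
          · have hd := ih (n - K) (by omega) (by omega) hsub
            obtain ⟨t, ht⟩ := hd
            exact ⟨t + 1, by rw [Nat.mul_succ, ← ht]; omega⟩
    · rintro ⟨t, rfl⟩
      have ht : 1 ≤ t := by
        by_contra h
        push_neg at h
        interval_cases t <;> omega
      clear hn
      induction t with
      | zero => omega
      | succ t ih =>
          rcases Nat.eq_zero_or_pos t with rfl | htpos
          · simpa using hKdvd
          · have h1 := ih htpos
            have := (hlemA (K * t)).mpr h1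
            rw [show K * (t + 1) = K + K * t from by ring]
            exact this
end

section
/- Let a, b be integers with a ≥ 1, b ≥ 1 and a*b ≥ 4, let c, d be the associated recursive sequences and g n = gcd(c n, d n). Let p be a prime such that a*b ≡ 4 (mod p) and such that it is NOT the case that p divides exactly one of a and b. Then p is the smallest positive integer k such that p divides g k; that is, p divides g p, and p does not divide g m for any m with 0 < m < p. -/
lemma KM_key (a b : ℤ) (p : ℕ) (h4 : ((a * b : ℤ) : ZMod p) = 4) (k : ℕ) :
    (((KMc a b (2*k) : ℤ) : ZMod p) = (k : ZMod p) * (a : ℤ) ∧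
     ((KMd a b (2*k) : ℤ) : ZMod p) = (k : ZMod p) * (b : ℤ)) ∧
    (((KMc a b (2*k+1) : ℤ) : ZMod p) = (2*k+1 : ℕ) ∧
     ((KMd a b (2*k+1) : ℤ) : ZMod p) = (2*k+1 : ℕ)) := by
  induction k with
  | zero => simp [KMc, KMd, KMcd]
  | succ k ih =>
    obtain ⟨⟨hc0, hd0⟩, hc1, hd1⟩ := ih
    have e1 : 2 * (k+1) = (2*k) + 2 := by ring
    have e2 : 2 * (k+1) + 1 = (2*k+1) + 2 := by ring
    have hc2 : ((KMc a b (2*(k+1)) : ℤ) : ZMod p) = ((k+1 : ℕ) : ZMod p) * (a : ℤ) := by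
      rw [e1]
      show (((a * (KMcd a b (2*k+1)).2 - (KMcd a b (2*k)).1 : ℤ)) : ZMod p) = _
      push_cast
      rw [show ((KMcd a b (2*k+1)).2 : ZMod p) = ((2*k+1 : ℕ) : ZMod p) from hd1,
          show ((KMcd a b (2*k)).1 : ZMod p) = (k : ZMod p) * (a : ℤ) from hc0]
      push_cast
      ring
    have hd2 : ((KMd a b (2*(k+1)) : ℤ) : ZMod p) = ((k+1 : ℕ) : ZMod p) * (b : ℤ) := by
      rw [e1]
      show (((b * (KMcd a b (2*k+1)).1 - (KMcd a b (2*k)).2 : ℤ)) : ZMod p) = _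
      push_cast
      rw [show ((KMcd a b (2*k+1)).1 : ZMod p) = ((2*k+1 : ℕ) : ZMod p) from hc1,
          show ((KMcd a b (2*k)).2 : ZMod p) = (k : ZMod p) * (b : ℤ) from hd0]
      push_cast
      ring
    refine ⟨⟨hc2, hd2⟩, ?_, ?_⟩
    · rw [e2]
      show (((a * (KMcd a b (2*k+1+1)).2 - (KMcd a b (2*k+1)).1 : ℤ)) : ZMod p) = _
      push_cast
      have : (2*k+1+1) = 2*(k+1) := by ring
      rw [this]
      rw [show ((KMcd a b (2*(k+1))).2 : ZMod p) = ((k+1 : ℕ) : ZMod p) * (b : ℤ) from hd2,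
          show ((KMcd a b (2*k+1)).1 : ZMod p) = ((2*k+1 : ℕ) : ZMod p) from hc1]
      push_cast
      have hab4 : (a : ZMod p) * (b : ZMod p) = 4 := by push_cast at h4; exact h4
      linear_combination ((k : ZMod p) + 1) * hab4
    · rw [e2]
      show (((b * (KMcd a b (2*k+1+1)).1 - (KMcd a b (2*k+1)).2 : ℤ)) : ZMod p) = _
      push_cast
      have : (2*k+1+1) = 2*(k+1) := by ring
      rw [this]
      rw [show ((KMcd a b (2*(k+1))).1 : ZMod p) = ((k+1 : ℕ) : ZMod p) * (a : ℤ) from hc2,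
          show ((KMcd a b (2*k+1)).2 : ZMod p) = ((2*k+1 : ℕ) : ZMod p) from hd1]
      push_cast
      have hab4 : (a : ZMod p) * (b : ZMod p) = 4 := by push_cast at h4; exact h4
      linear_combination ((k : ZMod p) + 1) * hab4

theorem smallest_k_eq_p_of_ab_cong_four
    (a b : ℤ) (ha : 1 ≤ a) (hb : 1 ≤ b) (hab : 4 ≤ a * b)
    (p : ℕ) (hp : p.Prime)
    (hmod : a * b ≡ 4 [ZMOD (p : ℤ)])
    (hnotone : ¬ (((p : ℤ) ∣ a ∧ ¬ (p : ℤ) ∣ b) ∨ (¬ (p : ℤ) ∣ a ∧ (p : ℤ) ∣ b))) :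
    p ∣ KMg a b p ∧ ∀ m : ℕ, 0 < m → m < p → ¬ p ∣ KMg a b m := by
  haveI : Fact p.Prime := ⟨hp⟩
  haveI : NeZero p := ⟨hp.pos.ne'⟩
  have h4 : ((a * b : ℤ) : ZMod p) = 4 := by
    have := (ZMod.intCast_eq_intCast_iff (a*b) 4 p).mpr hmod
    rw [this]; norm_num
  have hdvd : ∀ n, p ∣ KMg a b n ↔
      (((KMc a b n : ℤ) : ZMod p) = 0 ∧ ((KMd a b n : ℤ) : ZMod p) = 0) := by
    intro n
    rw [KMg]
    constructor
    · intro h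
      have h' : (p : ℤ) ∣ (Int.gcd (KMc a b n) (KMd a b n) : ℤ) := Int.natCast_dvd_natCast.mpr h
      exact ⟨(ZMod.intCast_zmod_eq_zero_iff_dvd _ _).mpr (h'.trans (Int.gcd_dvd_left _ _)),
             (ZMod.intCast_zmod_eq_zero_iff_dvd _ _).mpr (h'.trans (Int.gcd_dvd_right _ _))⟩
    · rintro ⟨h1, h2⟩
      have h1' := (ZMod.intCast_zmod_eq_zero_iff_dvd _ _).mp h1
      have h2' := (ZMod.intCast_zmod_eq_zero_iff_dvd _ _).mp h2
      exact_mod_cast Int.dvd_gcd h1' h2'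
  rcases hp.eq_two_or_odd' with hp2 | hodd
  · -- p = 2
    subst hp2
    have hab2 : (2 : ℤ) ∣ a * b := by
      have := hmod.dvd  -- (2:ℤ) ∣ 4 - a*b
      have h2 : ((2:ℕ) : ℤ) ∣ 4 := by norm_num
      omega
    have hor := Int.prime_two.dvd_mul.mp hab2
    have h2a : (2:ℤ) ∣ a := by
      rcases hor with h | h
      · exact h
      · by_contra hna
        exact hnotone (Or.inr ⟨by exact_mod_cast hna, by exact_mod_cast h⟩)
    have h2b : (2:ℤ) ∣ b := by
      rcases hor with h | h
      · by_contra hnb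
        exact hnotone (Or.inl ⟨by exact_mod_cast h, by exact_mod_cast hnb⟩)
      · exact h
    constructor
    · rw [hdvd]
      have hc : KMc a b 2 = a := by simp [KMc, KMcd]
      have hd : KMd a b 2 = b := by simp [KMd, KMcd]
      rw [hc, hd]
      exact ⟨(ZMod.intCast_zmod_eq_zero_iff_dvd _ _).mpr (by exact_mod_cast h2a),
             (ZMod.intCast_zmod_eq_zero_iff_dvd _ _).mpr (by exact_mod_cast h2b)⟩
    · intro m hm1 hm2
      interval_cases m
      simp [KMg, KMc, KMd, KMcd]
  · -- p odd
    have hpa : ¬ (p : ℤ) ∣ a := by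
      intro h
      have hab' : (p : ℤ) ∣ a * b := h.mul_right b
      have h4' : (p : ℤ) ∣ 4 := by
        have := (Int.ModEq.dvd hmod).add hab'
        simpa using this
      have hp4 : p ∣ 4 := by exact_mod_cast h4'
      have : p ∣ 2 := hp.dvd_of_dvd_pow (n := 2) (by norm_num [pow_two]; exact hp4)
      have := (Nat.prime_dvd_prime_iff_eq hp Nat.prime_two).mp this
      exact (Nat.not_even_iff_odd.mpr hodd) (by rw [this]; exact even_two)
    have hpb : ¬ (p : ℤ) ∣ b := by
      intro h
      have hab' : (p : ℤ) ∣ a * b := h.mul_left a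
      have h4' : (p : ℤ) ∣ 4 := by
        have := (Int.ModEq.dvd hmod).add hab'
        simpa using this
      have hp4 : p ∣ 4 := by exact_mod_cast h4'
      have : p ∣ 2 := hp.dvd_of_dvd_pow (n := 2) (by norm_num [pow_two]; exact hp4)
      have := (Nat.prime_dvd_prime_iff_eq hp Nat.prime_two).mp this
      exact (Nat.not_even_iff_odd.mpr hodd) (by rw [this]; exact even_two)
    constructor
    · obtain ⟨k, hk⟩ := hodd
      obtain ⟨_, hc1, hd1⟩ := KM_key a b p h4 k
      rw [hdvd, show KMc a b p = KMc a b (2*k+1) from by rw [hk],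
          show KMd a b p = KMd a b (2*k+1) from by rw [hk]]
      have hz : ((2*k+1 : ℕ) : ZMod p) = 0 := by rw [← hk]; exact ZMod.natCast_self p
      exact ⟨by rw [hc1, hz], by rw [hd1, hz]⟩
    · intro m hm1 hm2 hdm
      rw [hdvd m] at hdm
      obtain ⟨hcm, hdm'⟩ := hdm
      have hpm : ¬ p ∣ m := fun h => absurd (Nat.le_of_dvd hm1 h) (by omega)
      rcases Nat.even_or_odd m with ⟨j, hj⟩ | ⟨j, hj⟩
      · -- m = 2*j
        have hj' : m = 2 * j := by omega
        obtain ⟨⟨hc0, hd0⟩, _⟩ := KM_key a b p h4 j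
        rw [hj'] at hcm hdm'
        rw [hc0] at hcm
        rw [hd0] at hdm'
        have hjne : ((j : ℕ) : ZMod p) ≠ 0 := by
          rw [Ne, ZMod.natCast_eq_zero_iff]
          intro h
          have hj0 : 0 < j := by omega
          have := Nat.le_of_dvd hj0 h
          omega
        rcases mul_eq_zero.mp hcm with h | h
        · exact hjne h
        · exact hpa ((ZMod.intCast_zmod_eq_zero_iff_dvd _ _).mp h)
      · -- m = 2*j+1
        obtain ⟨_, hc1, _⟩ := KM_key a b p h4 j
        rw [hj] at hcm
        rw [hc1] at hcm
        have : p ∣ 2*j+1 := (ZMod.natCast_eq_zero_iff _ _).mp hcm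
        rw [← hj] at this
        exact hpm this
end

section
/- Let a, b be integers with a ≥ 1, b ≥ 1 and a*b ≥ 4, let c, d be the associated recursive sequences and g n = gcd(c n, d n). Let p be a prime such that a*b ≢ 4 (mod p) and such that it is NOT the case that p divides exactly one of a and b. Then the polynomial X² − (a*b − 2)·X + 1 has a root in the field GaloisField p 2 with p² elements; moreover every such root α is nonzero, and the multiplicative order of α is the smallest positive integer k such that p divides g k (in particular this order is the same for both roots). -/
namespace KMaux

/-- The Chebyshev-like sequence `U 0 = 0`, `U 1 = 1`, `U (k+2) = t * U (k+1) - U k`. -/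
def U (t : ℤ) : ℕ → ℤ
  | 0 => 0
  | 1 => 1
  | k + 2 => t * U t (k + 1) - U t k

lemma cd_eq (a b : ℤ) : ∀ k : ℕ,
    KMcd a b (2 * k) = (a * U (a * b - 2) k, b * U (a * b - 2) k) ∧
    KMcd a b (2 * k + 1) =
      (U (a * b - 2) (k + 1) + U (a * b - 2) k, U (a * b - 2) (k + 1) + U (a * b - 2) k)
  | 0 => by simp [KMcd, U]
  | k + 1 => by
    obtain ⟨h1, h2⟩ := cd_eq a b k
    have hc2 : KMcd a b (2 * k + 2) =
        (a * U (a * b - 2) (k + 1), b * U (a * b - 2) (k + 1)) := by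
      rw [show 2 * k + 2 = (2 * k) + 2 from rfl, KMcd, h1, h2]
      simp only [Prod.mk.injEq]
      constructor <;> ring
    have hc3 : KMcd a b (2 * k + 3) =
        (U (a * b - 2) (k + 2) + U (a * b - 2) (k + 1),
         U (a * b - 2) (k + 2) + U (a * b - 2) (k + 1)) := by
      rw [show 2 * k + 3 = (2 * k + 1) + 2 from rfl, KMcd, hc2, h2,
        show U (a * b - 2) (k + 2) = (a * b - 2) * U (a * b - 2) (k + 1) - U (a * b - 2) k
          from rfl]
      simp only [Prod.mk.injEq]
      constructor <;> ring
    refine ⟨?_, ?_⟩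
    · rw [show 2 * (k + 1) = 2 * k + 2 from by ring]; exact hc2
    · rw [show 2 * (k + 1) + 1 = 2 * k + 3 from by ring]; exact hc3

lemma g_even (a b : ℤ) (k : ℕ) :
    KMg a b (2 * k) = Int.gcd a b * (U (a * b - 2) k).natAbs := by
  unfold KMg KMc KMd
  rw [(cd_eq a b k).1]
  exact Int.gcd_mul_right a (U (a * b - 2) k) b

lemma g_odd (a b : ℤ) (k : ℕ) :
    KMg a b (2 * k + 1) = (U (a * b - 2) (k + 1) + U (a * b - 2) k).natAbs := by
  unfold KMg KMc KMd
  rw [(cd_eq a b k).2]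
  exact Int.gcd_self

variable {F : Type*} [Field F]

lemma root_pow (t : ℤ) (γ : F) (hγ : γ ^ 2 - (t : F) * γ + 1 = 0) :
    ∀ k : ℕ, γ ^ k = (U t (k + 1) : F) - (U t k : F) * ((t : F) - γ)
  | 0 => by simp [U]
  | k + 1 => by
    have ih := root_pow t γ hγ k
    rw [show U t (k + 1 + 1) = t * U t (k + 1) - U t k from rfl]
    push_cast
    linear_combination γ * ih + (U t k : F) * hγ

lemma pow_odd_iff (t : ℤ) (γ : F) (hγ : γ ^ 2 - (t : F) * γ + 1 = 0) (hone : γ ≠ 1) (k : ℕ) :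
    γ ^ (2 * k + 1) = 1 ↔ ((U t (k + 1) + U t k : ℤ) : F) = 0 := by
  set β : F := (t : F) - γ with hβdef
  have hβγ : γ * β = 1 := by rw [hβdef]; linear_combination -hγ
  have hβ0 : β ^ k ≠ 0 := by
    apply pow_ne_zero
    intro h0
    rw [h0, mul_zero] at hβγ
    exact zero_ne_one hβγ
  have hβroot : β ^ 2 - (t : F) * β + 1 = 0 := by rw [hβdef]; linear_combination hγ
  have hβ := root_pow t β hβroot k
  have hγk := root_pow t γ hγ (k + 1)
  rw [show (t : F) - β = γ from by rw [hβdef]; ring] at hβ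
  have key : γ ^ (k + 1) - β ^ k = ((U t (k + 1) + U t k : ℤ) : F) * (γ - 1) := by
    rw [hβ, hγk, show U t (k + 1 + 1) = t * U t (k + 1) - U t k from rfl]
    push_cast
    ring
  have hmul : γ ^ (2 * k + 1) * β ^ k = γ ^ (k + 1) := by
    rw [show 2 * k + 1 = (k + 1) + k from by omega, pow_add, mul_assoc, ← mul_pow, hβγ,
      one_pow, mul_one]
  constructor
  · intro h
    rw [h, one_mul] at hmul
    have h0 : ((U t (k + 1) + U t k : ℤ) : F) * (γ - 1) = 0 := by
      rw [← key, hmul]; ring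
    rcases mul_eq_zero.1 h0 with h' | h'
    · exact h'
    · exact absurd (by linear_combination h') hone
  · intro h
    have h2 : γ ^ (k + 1) = β ^ k := by linear_combination key + (γ - 1) * h
    apply mul_right_cancel₀ hβ0
    rw [hmul, h2, one_mul]

lemma pow_even_iff (t : ℤ) (γ : F) (hγ : γ ^ 2 - (t : F) * γ + 1 = 0) (hone : γ ≠ 1) (k : ℕ) :
    γ ^ (2 * k) = 1 ↔ (γ = -1 ∨ ((U t k : ℤ) : F) = 0) := by
  set β : F := (t : F) - γ with hβdef
  have hβγ : γ * β = 1 := by rw [hβdef]; linear_combination -hγ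
  have hβ0 : β ^ k ≠ 0 := by
    apply pow_ne_zero
    intro h0
    rw [h0, mul_zero] at hβγ
    exact zero_ne_one hβγ
  have hβroot : β ^ 2 - (t : F) * β + 1 = 0 := by rw [hβdef]; linear_combination hγ
  have hβ := root_pow t β hβroot k
  have hγk := root_pow t γ hγ k
  rw [show (t : F) - β = γ from by rw [hβdef]; ring] at hβ
  have key : γ ^ k - β ^ k = ((U t k : ℤ) : F) * (γ - β) := by
    rw [hβ, hγk]; ring
  have hmul : γ ^ (2 * k) * β ^ k = γ ^ k := by
    rw [show 2 * k = k + k from by omega, pow_add, mul_assoc, ← mul_pow, hβγ,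
      one_pow, mul_one]
  have hbb : γ = β ↔ γ = -1 := by
    constructor
    · intro h
      have h2 : γ ^ 2 = 1 := by
        rw [sq]; nth_rewrite 2 [h]; exact hβγ
      have h3 : (γ - 1) * (γ + 1) = 0 := by linear_combination h2
      rcases mul_eq_zero.1 h3 with h' | h'
      · exact absurd (by linear_combination h') hone
      · exact eq_neg_of_add_eq_zero_left h'
    · intro h
      have ht : (t : F) = -2 := by
        rw [h] at hγ; linear_combination hγ
      rw [hβdef, ht, h]; ring
  constructor
  · intro h
    rw [h, one_mul] at hmul
    have h0 : ((U t k : ℤ) : F) * (γ - β) = 0 := by rw [← key, hmul]; ring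
    rcases mul_eq_zero.1 h0 with h' | h'
    · exact Or.inr h'
    · exact Or.inl (hbb.1 (by linear_combination h'))
  · intro h
    have h2 : γ ^ k = β ^ k := by
      rcases h with h | h
      · rw [hbb.2 h]
      · linear_combination key + (γ - β) * h
    apply mul_right_cancel₀ hβ0
    rw [hmul, h2, one_mul]

lemma dvd_g_iff (a b : ℤ) (p : ℕ) (hp : p.Prime)
    (hnotone : ¬ (((p : ℤ) ∣ a ∧ ¬ (p : ℤ) ∣ b) ∨ (¬ (p : ℤ) ∣ a ∧ (p : ℤ) ∣ b)))
    {F : Type*} [Field F] [CharP F p]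
    (α : F) (hα : α ^ 2 - ((a * b - 2 : ℤ) : F) * α + 1 = 0) (hone : α ≠ 1) (n : ℕ) :
    p ∣ KMg a b n ↔ α ^ n = 1 := by
  have hcast : ∀ x : ℤ, ((x : ℤ) : F) = 0 ↔ (p : ℤ) ∣ x := fun x =>
    CharP.intCast_eq_zero_iff F p x
  have hpp : Prime (p : ℤ) := Nat.prime_iff_prime_int.mp hp
  have hneg : α = -1 ↔ ((p : ℤ) ∣ a ∧ (p : ℤ) ∣ b) := by
    constructor
    · intro h
      have hab0 : ((a * b : ℤ) : F) = 0 := by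
        rw [h] at hα; push_cast at hα ⊢; linear_combination hα
      rcases hpp.dvd_mul.1 ((hcast _).1 hab0) with h' | h' <;> tauto
    · rintro ⟨h1, h2⟩
      have ha0 : ((a : ℤ) : F) = 0 := (hcast a).2 h1
      have hsq : (α + 1) ^ 2 = 0 := by
        push_cast at hα
        linear_combination hα + α * (b : F) * ha0
      have h0 := pow_eq_zero_iff (n := 2) (by norm_num) |>.1 hsq
      linear_combination h0
  have hgcd : p ∣ Int.gcd a b ↔ ((p : ℤ) ∣ a ∧ (p : ℤ) ∣ b) := by
    constructor
    · intro h
      have h' : ((p : ℕ) : ℤ) ∣ (Int.gcd a b : ℤ) := Int.natCast_dvd_natCast.2 h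
      exact ⟨h'.trans (Int.gcd_dvd_left a b), h'.trans (Int.gcd_dvd_right a b)⟩
    · rintro ⟨h1, h2⟩
      exact Int.natCast_dvd_natCast.1 (Int.dvd_coe_gcd h1 h2)
  have habs : ∀ x : ℤ, (p ∣ x.natAbs) ↔ ((x : ℤ) : F) = 0 := fun x =>
    Int.natCast_dvd.symm.trans (hcast x).symm
  rcases Nat.even_or_odd n with he | ho
  · obtain ⟨k, hk⟩ := he
    rw [show n = 2 * k from by omega, g_even, Nat.Prime.dvd_mul hp,
      pow_even_iff (a * b - 2) α hα hone k]
    exact or_congr (hgcd.trans hneg.symm) (habs _)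
  · obtain ⟨k, hk⟩ := ho
    rw [show n = 2 * k + 1 from by omega, g_odd,
      pow_odd_iff (a * b - 2) α hα hone k]
    exact habs _

set_option synthInstance.maxHeartbeats 1000000 in
set_option maxHeartbeats 1000000 in
lemma exists_root (a b : ℤ) (p : ℕ) [Fact p.Prime] :
    ∃ α : GaloisField p 2, α ^ 2 - ((a * b - 2 : ℤ) : GaloisField p 2) * α + 1 = 0 := by
  set t0 : ZMod p := ((a * b - 2 : ℤ) : ZMod p) with ht0
  have hmap : (algebraMap (ZMod p) (GaloisField p 2)) t0
      = ((a * b - 2 : ℤ) : GaloisField p 2) := by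
    rw [ht0, map_intCast]
  by_cases hr : ∃ r : ZMod p, r ^ 2 - t0 * r + 1 = 0
  · obtain ⟨r, hr⟩ := hr
    refine ⟨algebraMap (ZMod p) _ r, ?_⟩
    have h := congrArg (algebraMap (ZMod p) (GaloisField p 2)) hr
    rw [map_add, map_sub, map_pow, map_mul, map_one, map_zero, hmap] at h
    exact h
  · set f : Polynomial (ZMod p) :=
      Polynomial.X ^ 2 - Polynomial.C t0 * Polynomial.X + 1 with hf
    have hdeg : f.natDegree = 2 := by
      rw [hf]; compute_degree!
    have hf0 : f ≠ 0 := fun h => by simp [h] at hdeg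
    have hirr : Irreducible f := by
      rw [Polynomial.irreducible_iff_roots_eq_zero_of_degree_le_three (by omega) (by omega),
        Multiset.eq_zero_iff_forall_notMem]
      intro r hrmem
      rw [Polynomial.mem_roots hf0] at hrmem
      refine hr ⟨r, ?_⟩
      have h := hrmem
      simp only [hf, Polynomial.IsRoot, Polynomial.eval_add, Polynomial.eval_sub,
        Polynomial.eval_pow, Polynomial.eval_mul, Polynomial.eval_X, Polynomial.eval_C,
        Polynomial.eval_one] at h
      exact h
    haveI := Fact.mk hirr
    let pb := AdjoinRoot.powerBasis hf0
    haveI : Fintype (AdjoinRoot f) := Module.fintypeOfFintype pb.basis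
    have hcard : Fintype.card (AdjoinRoot f) = p ^ 2 := by
      rw [Module.card_fintype pb.basis, ZMod.card, Fintype.card_fin,
        AdjoinRoot.powerBasis_dim, hdeg]
    let e := GaloisField.algEquivGaloisFieldOfFintype p 2 hcard
    have hroot : (AdjoinRoot.root f) ^ 2
        - algebraMap (ZMod p) (AdjoinRoot f) t0 * (AdjoinRoot.root f) + 1 = 0 := by
      have h := AdjoinRoot.eval₂_root f
      simp only [hf, Polynomial.eval₂_add, Polynomial.eval₂_sub, Polynomial.eval₂_mul,
        Polynomial.eval₂_pow, Polynomial.eval₂_X, Polynomial.eval₂_C,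
        Polynomial.eval₂_one] at h
      rw [AdjoinRoot.algebraMap_eq]
      exact h
    refine ⟨e (AdjoinRoot.root f), ?_⟩
    have h := congrArg e.toAlgHom hroot
    rw [map_add, map_sub, map_pow, map_mul, map_one, map_zero, AlgHom.commutes, hmap] at h
    have h2 : e.toAlgHom (AdjoinRoot.root f) = e (AdjoinRoot.root f) := rfl
    rw [h2] at h
    exact h

end KMaux

theorem smallest_k_eq_order_of_root
    (a b : ℤ) (ha : 1 ≤ a) (hb : 1 ≤ b) (hab : 4 ≤ a * b)
    (p : ℕ) [Fact p.Prime]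
    (hmod : ¬ a * b ≡ 4 [ZMOD (p : ℤ)])
    (hnotone : ¬ (((p : ℤ) ∣ a ∧ ¬ (p : ℤ) ∣ b) ∨ (¬ (p : ℤ) ∣ a ∧ (p : ℤ) ∣ b))) :
    (∃ α : GaloisField p 2, α ^ 2 - ((a * b - 2 : ℤ) : GaloisField p 2) * α + 1 = 0) ∧
    ∀ α : GaloisField p 2, α ^ 2 - ((a * b - 2 : ℤ) : GaloisField p 2) * α + 1 = 0 →
      α ≠ 0 ∧ 0 < orderOf α ∧ p ∣ KMg a b (orderOf α) ∧
        ∀ m : ℕ, 0 < m → m < orderOf α → ¬ p ∣ KMg a b m := by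
  have hp : p.Prime := Fact.out
  refine ⟨KMaux.exists_root a b p, ?_⟩
  intro α hα
  have hone : α ≠ 1 := by
    intro h
    rw [h] at hα
    have h4 : ((a * b - 4 : ℤ) : GaloisField p 2) = 0 := by
      push_cast at hα ⊢
      linear_combination -hα
    have hd := (CharP.intCast_eq_zero_iff (GaloisField p 2) p _).1 h4
    exact hmod (Int.ModEq.symm (Int.modEq_iff_dvd.2 hd))
  have hiff := KMaux.dvd_g_iff a b p hp hnotone α hα hone
  have hne : α ≠ 0 := by
    intro h0
    rw [h0] at hα
    simp at hα
  haveI : Fintype (GaloisField p 2) := Fintype.ofFinite _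
  have hfin : IsOfFinOrder α := by
    refine isOfFinOrder_iff_pow_eq_one.2 ⟨Fintype.card (GaloisField p 2) - 1, ?_,
      FiniteField.pow_card_sub_one_eq_one α hne⟩
    have := Fintype.one_lt_card (α := GaloisField p 2)
    omega
  refine ⟨hne, hfin.orderOf_pos, (hiff _).2 (pow_orderOf_eq_one α), ?_⟩
  intro m hm hlt hdvd
  exact absurd (orderOf_le_of_pow_eq_one hm ((hiff m).1 hdvd)) (by omega)
end

section
/- Let F be a field, let A be a (not necessarily commutative) associative unital F-algebra that is finitely generated as an F-algebra, and let B be an F-subalgebra of A. Suppose that A, regarded as a left B-module via left multiplication, is free with a finite basis c_1, …, c_m such that c_1 = 1. Then B is finitely generated as an F-algebra. -/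
theorem finiteType_of_free_basis
    (F : Type*) [Field F] (A : Type*) [Ring A] [Algebra F A]
    (hA : Algebra.FiniteType F A) (B : Subalgebra F A)
    (m : ℕ) (c : Fin (m + 1) → A) (hc0 : c 0 = 1)
    (hbasis : ∀ x : A, ∃! f : Fin (m + 1) → B, x = ∑ i, (f i : A) * c i) :
    Algebra.FiniteType F B := by
  obtain ⟨s, hs⟩ := hA.out
  set t : A → Fin (m+1) → B := fun a => (hbasis a).choose with ht
  have htspec : ∀ a : A, a = ∑ i, (t a i : A) * c i := fun a => (hbasis a).choose_spec.1
  set T : Set A :=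
    Set.range (fun p : Fin (m+1) × s × Fin (m+1) => (t (c p.1 * (p.2.1 : A)) p.2.2 : A)) with hT
  have hTfin : T.Finite := Set.finite_range _
  set B₀ : Subalgebra F A := Algebra.adjoin F T with hB₀
  have hB₀B : B₀ ≤ B := Algebra.adjoin_le (by rintro x ⟨p, rfl⟩; exact (t _ _).2)
  have key : ∀ a : A, ∃ f : Fin (m+1) → A, (∀ i, f i ∈ B₀) ∧ a = ∑ i, f i * c i := by
    intro a
    have ha : a ∈ Algebra.adjoin F (s : Set A) := hs ▸ Algebra.mem_top
    have ha2 : a ∈ Submodule.span F (Submonoid.closure (s : Set A) : Set A) := by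
      rw [← Algebra.adjoin_eq_span]; exact ha
    clear ha
    induction ha2 using Submodule.span_induction with
    | mem u hu =>
      induction hu using Submonoid.closure_induction_right with
      | one =>
        refine ⟨fun i => if i = 0 then 1 else 0, fun i => by dsimp only; split <;> [exact one_mem _; exact zero_mem _], ?_⟩
        simp [ite_mul, hc0]
      | mul_right a ha x hx hpa =>
        obtain ⟨f, hf, hfa⟩ := hpa
        refine ⟨fun j => ∑ i, f i * (t (c i * x) j : A), fun j => ?_, ?_⟩
        · refine sum_mem fun i _ => ?_
          have hmem : (t (c i * x) j : A) ∈ T := ⟨(i, ⟨x, hx⟩, j), rfl⟩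
          exact mul_mem (hf i) (Algebra.subset_adjoin hmem)
        · calc a * x = ∑ i, f i * (c i * x) := by
                rw [hfa, Finset.sum_mul]; exact Finset.sum_congr rfl fun i _ => mul_assoc _ _ _
            _ = ∑ i, ∑ j, f i * ((t (c i * x) j : A) * c j) := by
                refine Finset.sum_congr rfl fun i _ => ?_
                conv_lhs => rw [htspec (c i * x)]
                rw [Finset.mul_sum]
            _ = ∑ j, (∑ i, f i * (t (c i * x) j : A)) * c j := by
                rw [Finset.sum_comm]
                refine Finset.sum_congr rfl fun j _ => ?_
                rw [Finset.sum_mul]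
                exact Finset.sum_congr rfl fun i _ => (mul_assoc _ _ _).symm
    | zero => exact ⟨0, fun i => zero_mem _, by simp⟩
    | add u v _ _ hu hv =>
      obtain ⟨f, hf, hfu⟩ := hu
      obtain ⟨g, hg, hgv⟩ := hv
      exact ⟨f + g, fun i => add_mem (hf i) (hg i), by
        simp [hfu, hgv, add_mul, Finset.sum_add_distrib]⟩
    | smul r u _ hu =>
      obtain ⟨f, hf, hfu⟩ := hu
      exact ⟨fun i => r • f i, fun i => Subalgebra.smul_mem _ (hf i) r, by
        simp [hfu, Finset.smul_sum, smul_mul_assoc]⟩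
  have hBB₀ : B ≤ B₀ := by
    intro b hb
    obtain ⟨f, hf, hfb⟩ := key b
    have h1 : b = ∑ i, (((fun i => (⟨f i, hB₀B (hf i)⟩ : B)) i : A)) * c i := hfb
    have h2 : b = ∑ i, (((fun i => if i = 0 then (⟨b, hb⟩ : B) else 0) i : A)) * c i := by
      simp only [apply_ite (fun x : B => (x : A)), ZeroMemClass.coe_zero, ite_mul, zero_mul]
      simp [hc0]
    have := ((hbasis b).choose_spec.2 _ h1).trans ((hbasis b).choose_spec.2 _ h2).symm
    have h0 := congrArg (fun g => ((g 0 : B) : A)) this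
    simp only [if_true] at h0
    exact h0 ▸ hf 0
  have hEq : B = B₀ := le_antisymm hBB₀ hB₀B
  rw [← Subalgebra.fg_iff_finiteType, hEq]
  exact ⟨hTfin.toFinset, by rw [hTfin.coe_toFinset]⟩
end

section
/- Let a, b be integers with a ≥ 1, b ≥ 1 and a*b ≥ 4, and let c, d be the associated recursive sequences. In the ring of formal power series ℤ⟦X⟧, the generating functions C(X) = Σ_{i≥0} c_i X^i and D(X) = Σ_{i≥0} d_i X^i satisfy the functional equations (1 + X²)·C(X) = X + a·X·D(X) and (1 + X²)·D(X) = X + b·X·C(X). -/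
open PowerSeries in
lemma KM_gen_fun_key (a : ℤ) (f g : ℕ → ℤ) (h0 : f 0 = 0) (h1 : f 1 = 1) (hg0 : g 0 = 0)
    (hrec : ∀ n, f (n + 2) = a * g (n + 1) - f n) :
    (1 + X ^ 2) * PowerSeries.mk f = X + C (R := ℤ) a * (X * PowerSeries.mk g) := by
  ext n
  match n with
  | 0 => simp [h0, mul_comm]
  | 1 =>
    rw [add_mul, one_mul, map_add, coeff_X_pow_mul', map_add, coeff_C_mul,
      show (1:ℕ) = 0 + 1 from rfl, coeff_succ_X_mul]
    simp [h1, hg0]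
  | n + 2 =>
    rw [add_mul, one_mul, map_add, coeff_X_pow_mul, map_add, coeff_C_mul,
      show n + 2 = (n + 1) + 1 from rfl, coeff_succ_X_mul]
    simp [coeff_mk, coeff_X, hrec n]

theorem generating_function_functional_equations
    (a b : ℤ) (ha : 1 ≤ a) (hb : 1 ≤ b) (hab : 4 ≤ a * b) :
    (1 + PowerSeries.X ^ 2) * PowerSeries.mk (fun i => KMc a b i)
        = PowerSeries.X
          + PowerSeries.C (R := ℤ) a * (PowerSeries.X * PowerSeries.mk (fun i => KMd a b i)) ∧
    (1 + PowerSeries.X ^ 2) * PowerSeries.mk (fun i => KMd a b i)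
        = PowerSeries.X
          + PowerSeries.C (R := ℤ) b * (PowerSeries.X * PowerSeries.mk (fun i => KMc a b i)) := by
  constructor
  · exact KM_gen_fun_key a _ _ rfl rfl rfl (fun n => rfl)
  · exact KM_gen_fun_key b _ _ rfl rfl rfl (fun n => rfl)
end

section
/- Let a, b be integers with a ≥ 1, b ≥ 1 and a*b ≥ 4, let c, d be the associated recursive sequences, and let p be an odd prime with a*b ≢ 4 (mod p). Let F = GaloisField p 2 be the field with p² elements, choose μ ∈ F with μ² = (a*b − 4 : F) (such μ exists), and set M = (2 : F)⁻¹ • !![μ, (a:F); (b:F), μ], a 2×2 matrix over F. Then M is invertible, M − M⁻¹ is invertible, and for every natural number n the vector ((c n : F), (d n : F)) equals ((M − M⁻¹)⁻¹ * (M^n − (M⁻¹)^n)) applied to the vector (1, 1). -/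
theorem matrix_formula_galoisField
    (a b : ℤ) (ha : 1 ≤ a) (hb : 1 ≤ b) (hab : 4 ≤ a * b)
    (p : ℕ) [Fact p.Prime] (hodd : Odd p)
    (hmod : ¬ a * b ≡ 4 [ZMOD (p : ℤ)]) :
    (∃ μ : GaloisField p 2, μ ^ 2 = ((a * b - 4 : ℤ) : GaloisField p 2)) ∧
    ∀ μ : GaloisField p 2, μ ^ 2 = ((a * b - 4 : ℤ) : GaloisField p 2) →
      let M : Matrix (Fin 2) (Fin 2) (GaloisField p 2) :=
        (2 : GaloisField p 2)⁻¹ •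
          !![μ, ((a : ℤ) : GaloisField p 2); ((b : ℤ) : GaloisField p 2), μ]
      IsUnit M ∧ IsUnit (M - M⁻¹) ∧
      ∀ n : ℕ,
        ![((KMc a b n : ℤ) : GaloisField p 2), ((KMd a b n : ℤ) : GaloisField p 2)]
          = ((M - M⁻¹)⁻¹ * (M ^ n - (M⁻¹) ^ n)).mulVec ![1, 1] := by
  have hp : p.Prime := Fact.out
  have hp2 : p ≠ 2 := by
    rintro rfl; exact (Nat.not_odd_iff_even.mpr even_two) hodd
  set F := GaloisField p 2 with hF
  haveI : CharP F p := inferInstance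
  have hdvd : ¬ ((p : ℤ) ∣ (a * b - 4)) := fun h =>
    hmod (Int.modEq_iff_dvd.mpr (by simpa using dvd_neg.mpr h))
  have hy : ((a * b - 4 : ℤ) : ZMod p) ≠ 0 := by
    intro h
    exact hdvd (by exact_mod_cast (ZMod.intCast_zmod_eq_zero_iff_dvd (a * b - 4) p).mp h)
  have hinj : Function.Injective (algebraMap (ZMod p) F) := (algebraMap (ZMod p) F).injective
  have hcastF : ((a * b - 4 : ℤ) : F) = algebraMap (ZMod p) F ((a * b - 4 : ℤ) : ZMod p) :=
    (map_intCast (algebraMap (ZMod p) F) (a * b - 4)).symm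
  have hc : ((a * b - 4 : ℤ) : F) ≠ 0 := by
    rw [hcastF]
    intro h
    exact hy (hinj (by simpa using h))
  have h2z : (2 : ZMod p) ≠ 0 := by
    have hnd : ¬ (p ∣ 2) := fun h => hp2 ((Nat.prime_dvd_prime_iff_eq hp Nat.prime_two).mp h)
    intro h
    exact hnd ((ZMod.natCast_eq_zero_iff 2 p).mp (by exact_mod_cast h))
  have h2 : (2 : F) ≠ 0 := by
    intro h
    exact h2z (hinj (show algebraMap (ZMod p) F 2 = algebraMap (ZMod p) F 0 by
      rw [map_ofNat, map_zero]; exact h))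
  have hexists : ∃ μ : F, μ ^ 2 = ((a * b - 4 : ℤ) : F) := by
    letI : Fintype F := Fintype.ofFinite F
    have hcard : Fintype.card F = p ^ 2 := by
      rw [← Nat.card_eq_fintype_card]; exact GaloisField.card p 2 (by norm_num)
    have hchar : ringChar F ≠ 2 := by rw [ringChar.eq F p]; exact hp2
    have hsq : IsSquare ((a * b - 4 : ℤ) : F) := by
      rw [FiniteField.isSquare_iff hchar hc, hcard]
      have hkey : p ^ 2 / 2 = (p - 1) * ((p + 1) / 2) := by
        obtain ⟨k, rfl⟩ := hodd
        have h1 : (2 * k + 1) ^ 2 = 4 * (k * k) + 4 * k + 1 := by ring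
        have h3 : (2 * k + 1 + 1) / 2 = k + 1 := by omega
        have h4 : 2 * k + 1 - 1 = 2 * k := by omega
        have h2' : (2 * k + 1 - 1) * ((2 * k + 1 + 1) / 2) = 2 * (k * k) + 2 * k := by
          rw [h3, h4]; ring
        omega
      have hpow : ((a * b - 4 : ℤ) : F) ^ (p - 1) = 1 := by
        rw [hcastF, ← map_pow, ZMod.pow_card_sub_one_eq_one hy, map_one]
      rw [hkey, pow_mul, hpow, one_pow]
    obtain ⟨r, hr⟩ := hsq
    exact ⟨r, by rw [sq]; exact hr.symm⟩
  refine ⟨hexists, ?_⟩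
  intro μ hμ
  intro M
  have hM : M = (2 : F)⁻¹ • !![μ, ((a : ℤ) : F); ((b : ℤ) : F), μ] := rfl
  have hμ0 : μ ≠ 0 := by
    intro h
    apply hc
    rw [← hμ, h]; ring
  have hμμ : μ ^ 2 = ((a : ℤ) : F) * ((b : ℤ) : F) - 4 := by
    rw [hμ]; push_cast; ring
  set K : Matrix (Fin 2) (Fin 2) F := (2 : F)⁻¹ • !![-μ, ((a : ℤ) : F); ((b : ℤ) : F), -μ] with hK
  have hprod : !![μ, ((a : ℤ) : F); ((b : ℤ) : F), μ] * !![-μ, ((a : ℤ) : F); ((b : ℤ) : F), -μ]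
      = (4 : F) • 1 := by
    ext i j
    fin_cases i <;> fin_cases j <;>
      simp [Matrix.mul_apply, Fin.sum_univ_two, Matrix.one_apply] <;>
      first
        | ring1
        | linear_combination -hμμ
  have hMK : M * K = 1 := by
    rw [hM, hK, Matrix.smul_mul, Matrix.mul_smul, smul_smul, hprod, smul_smul]
    have h4 : (2 : F)⁻¹ * (2 : F)⁻¹ * 4 = 1 := by
      rw [← mul_inv, show (4:F) = 2*2 by norm_num]; exact inv_mul_cancel₀ (mul_ne_zero h2 h2)
    rw [h4, one_smul]
  have hKM : K * M = 1 := mul_eq_one_comm.mp hMK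
  have hMinv : M⁻¹ = K := Matrix.inv_eq_right_inv hMK
  have hMunit : IsUnit M := ⟨⟨M, K, hMK, hKM⟩, rfl⟩
  have hsub : M - M⁻¹ = μ • (1 : Matrix (Fin 2) (Fin 2) F) := by
    rw [hMinv, hM, hK]
    ext i j
    fin_cases i <;> fin_cases j <;> simp [Matrix.one_apply]
    all_goals field_simp
    all_goals rw [div_eq_iff h2]
    all_goals ring
  have hsubinv_mul : (M - M⁻¹) * (μ⁻¹ • (1 : Matrix (Fin 2) (Fin 2) F)) = 1 := by
    rw [hsub, smul_mul_smul_comm, one_mul, mul_inv_cancel₀ hμ0, one_smul]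
  have hsubinv_mul' : (μ⁻¹ • (1 : Matrix (Fin 2) (Fin 2) F)) * (M - M⁻¹) = 1 :=
    mul_eq_one_comm.mp hsubinv_mul
  have hsubunit : IsUnit (M - M⁻¹) := ⟨⟨M - M⁻¹, _, hsubinv_mul, hsubinv_mul'⟩, rfl⟩
  have hsubinv : (M - M⁻¹)⁻¹ = μ⁻¹ • (1 : Matrix (Fin 2) (Fin 2) F) :=
    Matrix.inv_eq_right_inv hsubinv_mul
  refine ⟨hMunit, hsubunit, ?_⟩
  have hA : M + K = !![0, ((a : ℤ) : F); ((b : ℤ) : F), 0] := by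
    rw [hM, hK]
    ext i j
    fin_cases i <;> fin_cases j <;> simp
    all_goals field_simp
    all_goals ring
  have step : ∀ n : ℕ, M ^ (n + 2) - K ^ (n + 2)
      = (M + K) * (M ^ (n + 1) - K ^ (n + 1)) - (M ^ n - K ^ n) := by
    intro n
    have h1 : M * K ^ (n + 1) = K ^ n := by
      rw [pow_succ', ← mul_assoc, hMK, one_mul]
    have h2' : K * M ^ (n + 1) = M ^ n := by
      rw [pow_succ', ← mul_assoc, hKM, one_mul]
    have e1 : M * M ^ (n + 1) = M ^ (n + 2) := (pow_succ' M (n + 1)).symm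
    have e2 : K * K ^ (n + 1) = K ^ (n + 2) := (pow_succ' K (n + 1)).symm
    rw [add_mul, mul_sub, mul_sub, e1, e2, h1, h2']
    abel
  have main : ∀ n : ℕ, (M ^ n - K ^ n).mulVec ![1, 1]
      = μ • ![((KMc a b n : ℤ) : F), ((KMd a b n : ℤ) : F)] := by
    intro n
    induction n using Nat.twoStepInduction with
    | zero =>
      simp [KMc, KMd, KMcd]
      ext i
      fin_cases i <;> rfl
    | one =>
      have h1 : M ^ 1 - K ^ 1 = μ • (1 : Matrix (Fin 2) (Fin 2) F) := by
        rw [pow_one, pow_one, ← hMinv, hsub]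
      rw [h1, Matrix.smul_mulVec, Matrix.one_mulVec]
      simp [KMc, KMd, KMcd]
    | more n ih ih1 =>
      rw [step n, Matrix.sub_mulVec, ← Matrix.mulVec_mulVec, ih1, ih, hA]
      ext i
      fin_cases i
      · simp [Matrix.mulVec, dotProduct, Fin.sum_univ_two,
            KMc_add_two, KMd_add_two]
        push_cast
        erw [Int.cast_mul]; ring
      · simp [Matrix.mulVec, dotProduct, Fin.sum_univ_two,
            KMc_add_two, KMd_add_two]
        push_cast
        ring
  intro n
  rw [hsubinv, hMinv, Matrix.smul_mul, one_mul, Matrix.smul_mulVec, main n,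
    smul_smul, inv_mul_cancel₀ hμ0, one_smul]
end

section
/- Let a, b be integers with a ≥ 1, b ≥ 1 and a*b ≥ 4, let c, d be the associated recursive sequences, and let p be an odd prime with a*b ≡ 4 (mod p). Set M = (2 : ZMod p)⁻¹ • !![0, (a : ZMod p); (b : ZMod p), 0], a 2×2 matrix over ℤ/p. Then for every natural number n the vector ((c n : ZMod p), (d n : ZMod p)) equals (n : ZMod p) • (M^(n+1)) applied to the vector (1, 1). -/
theorem matrix_formula_zmod
    (a b : ℤ) (ha : 1 ≤ a) (hb : 1 ≤ b) (hab : 4 ≤ a * b)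
    (p : ℕ) (hp : p.Prime) (hodd : Odd p)
    (hmod : a * b ≡ 4 [ZMOD (p : ℤ)]) :
    let M : Matrix (Fin 2) (Fin 2) (ZMod p) :=
      (2 : ZMod p)⁻¹ • !![0, ((a : ℤ) : ZMod p); ((b : ℤ) : ZMod p), 0]
    ∀ n : ℕ,
      ![((KMc a b n : ℤ) : ZMod p), ((KMd a b n : ℤ) : ZMod p)]
        = (n : ZMod p) • (M ^ (n + 1)).mulVec ![1, 1] := by
  intro M
  haveI : Fact p.Prime := ⟨hp⟩
  set A : ZMod p := ((a : ℤ) : ZMod p) with hA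
  set B : ZMod p := ((b : ℤ) : ZMod p) with hB
  have h2 : (2 : ZMod p) ≠ 0 := by
    intro h
    have h2' : ¬ ((p:ℕ) ∣ 2) := by
      intro h'
      have := hp.two_le
      have := Nat.le_of_dvd (by norm_num) h'
      have : p = 2 := by omega
      subst this; exact (by decide : ¬ Odd 2) hodd
    exact h2' ((ZMod.natCast_eq_zero_iff 2 p).mp (by exact_mod_cast h))
  have hAB : A * B = 4 := by
    have := (ZMod.intCast_eq_intCast_iff _ _ _).mpr hmod
    push_cast at this
    rw [hA, hB]; exact_mod_cast this
  have hBA : B * A = 4 := by rw [mul_comm]; exact hAB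
  have hinv : (2 : ZMod p)⁻¹ * 2 = 1 := inv_mul_cancel₀ h2
  have hMdef : M = (2 : ZMod p)⁻¹ • !![0, A; B, 0] := rfl
  have hM2 : M ^ 2 = 1 := by
    rw [hMdef, smul_pow]
    ext i j
    fin_cases i <;> fin_cases j <;>
      simp [pow_two, Matrix.mul_apply, Fin.sum_univ_two, Matrix.one_apply] <;>
      field_simp <;> linear_combination hAB
  have hrecC : ∀ n : ℕ, KMc a b (n + 2) = a * KMd a b (n + 1) - KMc a b n := by
    intro n; simp [KMc, KMd, KMcd]
  have hrecD : ∀ n : ℕ, KMd a b (n + 2) = b * KMc a b (n + 1) - KMd a b n := by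
    intro n; simp [KMc, KMd, KMcd]
  -- key congruences
  have key : ∀ n : ℕ,
      (((KMc a b n : ℤ) : ZMod p) = if Even n then (n : ZMod p) * (2⁻¹ * A) else (n : ZMod p)) ∧
      (((KMd a b n : ℤ) : ZMod p) = if Even n then (n : ZMod p) * (2⁻¹ * B) else (n : ZMod p)) := by
    have main : ∀ n : ℕ,
        ((((KMc a b n : ℤ) : ZMod p) = if Even n then (n : ZMod p) * (2⁻¹ * A) else (n : ZMod p)) ∧
         (((KMd a b n : ℤ) : ZMod p) = if Even n then (n : ZMod p) * (2⁻¹ * B) else (n : ZMod p))) ∧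
        ((((KMc a b (n+1) : ℤ) : ZMod p) = if Even (n+1) then ((n+1 : ℕ) : ZMod p) * (2⁻¹ * A) else ((n+1 : ℕ) : ZMod p)) ∧
         (((KMd a b (n+1) : ℤ) : ZMod p) = if Even (n+1) then ((n+1 : ℕ) : ZMod p) * (2⁻¹ * B) else ((n+1 : ℕ) : ZMod p))) := by
      intro n
      induction n with
      | zero => simp [KMc, KMd, KMcd]
      | succ n ih =>
        refine ⟨ih.2, ?_, ?_⟩
        · rw [hrecC n]
          push_cast
          rw [ih.2.2, ih.1.1, ← hA]
          rcases Nat.even_or_odd n with he | ho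
          · have h1 : ¬ Even (n+1) := by simp [Nat.even_add_one, he]
            have h2' : Even (n+2) := by rcases he with ⟨k, hk⟩; exact ⟨k+1, by omega⟩
            simp only [he, h1, h2', if_true, if_false, if_neg h1]
            field_simp
            push_cast; ring
          · have h1 : Even (n+1) := by rw [Nat.even_add_one]; simpa using ho
            have h2' : ¬ Even (n+2) := by
              rcases ho with ⟨k, hk⟩; rintro ⟨m, hm⟩; omega
            simp only [Nat.not_even_iff_odd.symm.mp ho, h1, if_true, if_false, if_neg (Nat.not_even_iff_odd.symm.mp ho), if_neg h2']
            field_simp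
            push_cast; linear_combination ((n : ZMod p) + 1) * hAB
        · rw [hrecD n]
          push_cast
          rw [ih.2.1, ih.1.2, ← hB]
          rcases Nat.even_or_odd n with he | ho
          · have h1 : ¬ Even (n+1) := by simp [Nat.even_add_one, he]
            have h2' : Even (n+2) := by rcases he with ⟨k, hk⟩; exact ⟨k+1, by omega⟩
            simp only [he, h1, h2', if_true, if_false, if_neg h1]
            field_simp
            push_cast; ring
          · have h1 : Even (n+1) := by rw [Nat.even_add_one]; simpa using ho
            have h2' : ¬ Even (n+2) := by
              rcases ho with ⟨k, hk⟩; rintro ⟨m, hm⟩; omega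
            simp only [Nat.not_even_iff_odd.symm.mp ho, h1, if_true, if_false, if_neg (Nat.not_even_iff_odd.symm.mp ho), if_neg h2']
            field_simp
            push_cast; linear_combination ((n : ZMod p) + 1) * hBA
    intro n; exact (main n).1
  intro n
  rcases Nat.even_or_odd n with ⟨k, hk⟩ | ⟨k, hk⟩
  · have hpow : M ^ (n + 1) = M := by
      subst hk
      rw [show k + k + 1 = 2 * k + 1 by ring, pow_succ, pow_mul, hM2, one_pow, one_mul]
    rw [hpow]
    have hc := (key n).1
    have hd := (key n).2
    have he : Even n := ⟨k, hk⟩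
    rw [if_pos he] at hc hd
    funext i
    fin_cases i <;>
      simp [hMdef, Matrix.mulVec, dotProduct, Fin.sum_univ_two, hc, hd]
  · have hpow : M ^ (n + 1) = 1 := by
      rw [show n + 1 = 2 * (k + 1) by omega, pow_mul, hM2, one_pow]
    rw [hpow]
    have hc := (key n).1
    have hd := (key n).2
    have ho : ¬ Even n := by rintro ⟨m, hm⟩; omega
    rw [if_neg ho] at hc hd
    funext i
    fin_cases i <;> simp [hc, hd]
end
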